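/- arXiv:1906.05463 — 2 statements merged into one kernel-verified Lean document; each statement's English description precedes it below -/
import Mathlib

section
/- Let A be a central essential arrangement in Q^l with integer coefficient matrix. If a prime p is not (σ,l)-lucky for A, then p divides the lcm-period ρ_0 of A. -/
open MvPolynomial
open scoped Classical

/-- The affine hyperplane solution set `{x | ∑ aₖ xₖ = b}` in `K^l`. -/
def hypSet (K : Type*) [CommRing K] {l : ℕ} (a : Fin l → K) (b : K) : Set (Fin l → K) :=
  {x | ∑ k, a k * x k = b}

/-- Dimension of a subset of `K^l` (intended: an affine subspace), with `adim ∅ = -1`. -/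
noncomputable def adim (K : Type*) [CommRing K] {l : ℕ} (S : Set (Fin l → K)) : ℤ :=
  if S = ∅ then -1 else Module.finrank K (affineSpan K S).direction

/-- `𝔉(𝒜)`: increasing `l`-tuples of indices whose hyperplanes intersect in dimension `0`. -/
noncomputable def Frak (K : Type*) [CommRing K] {l n : ℕ} (a : Fin n → Fin l → K) :
    Set (Fin l → Fin n) :=
  {t | StrictMono t ∧ adim K (⋂ j, hypSet K (a (t j)) 0) = 0}

/-- The leading term (exponent) `LT_σ(f)` of `f` with respect to the term ordering `σ`. -/
noncomputable def LTerm {l : ℕ} (σ : MonomialOrder (Fin l)) (f : MvPolynomial (Fin l) ℤ) :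
    Fin l →₀ ℕ :=
  σ.toSyn.symm (f.support.sup fun d => σ.toSyn d)

/-- The leading coefficient `LC_σ(f)` of `f` with respect to `σ`. -/
noncomputable def LCoef {l : ℕ} (σ : MonomialOrder (Fin l)) (f : MvPolynomial (Fin l) ℤ) : ℤ :=
  f.coeff (LTerm σ f)

/-- The leading monomial `LM_σ(f) = LC_σ(f)·LT_σ(f)` of `f`, as a polynomial. -/
noncomputable def LMon {l : ℕ} (σ : MonomialOrder (Fin l)) (f : MvPolynomial (Fin l) ℤ) :
    MvPolynomial (Fin l) ℤ :=
  monomial (LTerm σ f) (LCoef σ f)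

/-- `G` is a minimal strong `σ`-Gröbner basis of the ideal `I ⊆ ℤ[x₁,…,x_l]`. -/
def MinStrongGB {l : ℕ} (σ : MonomialOrder (Fin l)) (G : Finset (MvPolynomial (Fin l) ℤ))
    (I : Ideal (MvPolynomial (Fin l) ℤ)) : Prop :=
  (∀ g ∈ G, g ≠ 0) ∧ Ideal.span (G : Set (MvPolynomial (Fin l) ℤ)) = I ∧
  (∀ f ∈ I, f ≠ 0 → ∃ g ∈ G, LMon σ g ∣ LMon σ f) ∧
  (∀ g ∈ G, ∀ g' ∈ G, g ≠ g' → ¬ LMon σ g ∣ LMon σ g')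

/-- `p` is `σ`-lucky for `I`: it divides no leading coefficient of (any) minimal strong
`σ`-Gröbner basis of `I`. -/
def SigmaLucky {l : ℕ} (σ : MonomialOrder (Fin l)) (p : ℕ)
    (I : Ideal (MvPolynomial (Fin l) ℤ)) : Prop :=
  ∀ G : Finset (MvPolynomial (Fin l) ℤ), MinStrongGB σ G I → ∀ g ∈ G, ¬ (p : ℤ) ∣ LCoef σ g

/-- The linear form `∑ aₖ xₖ` as a polynomial in `ℤ[x₁,…,x_l]`. -/
noncomputable def intForm {l : ℕ} (a : Fin l → ℤ) : MvPolynomial (Fin l) ℤ :=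
  ∑ k, C (a k) * X k

/-- `p` is `(σ,κ)`-lucky for the arrangement with forms `a`: `p` is `σ`-lucky for every ideal
`⟨α_{i₁},…,α_{i_κ}⟩_ℤ` with `codim(H_{i₁} ∩ ⋯ ∩ H_{i_κ}) = κ`. -/
noncomputable def SigmaKLucky {l n : ℕ} (σ : MonomialOrder (Fin l)) (a : Fin n → Fin l → ℤ)
    (κ p : ℕ) : Prop :=
  ∀ t : Fin κ → Fin n, StrictMono t →
    adim ℚ (⋂ j, hypSet ℚ (fun k => (a (t j) k : ℚ)) 0) = (l : ℤ) - κ →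
    SigmaLucky σ p (Ideal.span (Set.range fun j => intForm (a (t j))))

/-- No prime number divides (all the coefficients of) any of the forms `αᵢ`. -/
def Primitive {l n : ℕ} (a : Fin n → Fin l → ℤ) : Prop :=
  ∀ (i : Fin n) (q : ℕ), q.Prime → ∃ k, ¬ (q : ℤ) ∣ a i k

/-- The `l × n` coefficient matrix `C` of the arrangement, `C k i = aᵢₖ`. -/
def coefMatrix {l n : ℕ} (a : Fin n → Fin l → ℤ) : Matrix (Fin l) (Fin n) ℤ :=
  Matrix.of fun k i => a i k

/-- The submatrix `C_J` of the columns of `C` indexed by `J` (in increasing order). -/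
def colSub {l n : ℕ} (C : Matrix (Fin l) (Fin n) ℤ) (J : Finset (Fin n)) :
    Matrix (Fin l) (Fin J.card) ℤ :=
  Matrix.of fun k j => C k ((J.orderIsoOfFin rfl j : Fin n))

/-- `diag(e 0, …, e (r-1))` padded with zeros is the Smith normal form of `M`:
there are unimodular `S`, `T` with `S M T` the padded diagonal matrix, the diagonal entries
being positive and satisfying the divisibility chain. -/
def IsSmithOf {l κ : ℕ} (M : Matrix (Fin l) (Fin κ) ℤ) (e : ℕ → ℤ) (r : ℕ) : Prop :=
  ∃ S : Matrix (Fin l) (Fin l) ℤ, ∃ T : Matrix (Fin κ) (Fin κ) ℤ,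
    IsUnit S.det ∧ IsUnit T.det ∧
    (∀ i j, (S * M * T) i j = if (i : ℕ) = (j : ℕ) ∧ (i : ℕ) < r then e (i : ℕ) else 0) ∧
    (∀ m, m < r → 0 < e m) ∧ (∀ m, m + 1 < r → e m ∣ e (m + 1))

/-- `d` is the largest elementary divisor `e(J)` of the (nonzero) integer matrix `M`. -/
def LargestElemDiv {l κ : ℕ} (M : Matrix (Fin l) (Fin κ) ℤ) (d : ℤ) : Prop :=
  ∃ (r : ℕ) (e : ℕ → ℤ), IsSmithOf M e r ∧ 0 < r ∧ d = e (r - 1)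


section AuxLemmas

variable {l : ℕ} (σ : MonomialOrder (Fin l))

lemma lterm_mem_support {f : MvPolynomial (Fin l) ℤ} (hf : f ≠ 0) :
    LTerm σ f ∈ f.support := by
  obtain ⟨b, hb, hsup⟩ :=
    Finset.exists_mem_eq_sup f.support (MvPolynomial.support_nonempty.mpr hf)
      (fun d => σ.toSyn d)
  rw [LTerm, hsup, AddEquiv.symm_apply_apply]
  exact hb

lemma toSyn_le_lterm {f : MvPolynomial (Fin l) ℤ} {d : Fin l →₀ ℕ} (hd : d ∈ f.support) :
    σ.toSyn d ≤ σ.toSyn (LTerm σ f) := by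
  rw [LTerm, AddEquiv.apply_symm_apply]
  exact Finset.le_sup hd

lemma lterm_eq {f : MvPolynomial (Fin l) ℤ} {β : Fin l →₀ ℕ} (h1 : MvPolynomial.coeff β f ≠ 0)
    (h2 : ∀ d ∈ f.support, σ.toSyn d ≤ σ.toSyn β) : LTerm σ f = β := by
  have hf : f ≠ 0 := fun h => h1 (by simp [h])
  have h3 := toSyn_le_lterm σ (MvPolynomial.mem_support_iff.mpr h1)
  have h4 := h2 _ (lterm_mem_support σ hf)
  exact σ.toSyn.injective (le_antisymm h4 h3)

end AuxLemmas

/-- Proposition 7.5: if `p` is not `(σ,l)`-lucky for the central essential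
arrangement `𝒜`, then `p` divides the lcm-period `ρ₀` of `𝒜`. -/
theorem stmt15 {l n : ℕ} (a : Fin n → Fin l → ℤ) (hprim : Primitive a)
    (hess : (Frak ℚ (fun i k => (a i k : ℚ))).Nonempty)
    (eF : Finset (Fin n) → ℤ)
    (heF : ∀ J : Finset (Fin n), J.Nonempty → J.card ≤ l →
      LargestElemDiv (colSub (coefMatrix a) J) (eF J))
    (ρ₀ : ℤ)
    (hρ : ρ₀ = ((Finset.univ : Finset (Finset (Fin n))).filter
      fun J => 1 ≤ J.card ∧ J.card ≤ l).lcm eF)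
    (σ : MonomialOrder (Fin l)) (p : ℕ) (hp : p.Prime)
    (hbad : ¬ SigmaKLucky σ a l p) :
    (p : ℤ) ∣ ρ₀ := by
  classical
  unfold SigmaKLucky SigmaLucky at hbad
  push_neg at hbad
  obtain ⟨t, ht, hdim, G, hG, g, hgG, hpg⟩ := hbad
  set I := Ideal.span (Set.range fun j => intForm (a (t j))) with hI
  obtain ⟨hGne, hGspan, hGstrong, hGmin⟩ := hG
  have hg0 : g ≠ 0 := hGne g hgG
  have hgI : g ∈ I := by rw [← hGspan]; exact Ideal.subset_span hgG
  -- every element of `I` has zero constant coefficient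
  have hI0 : ∀ f ∈ I, MvPolynomial.coeff 0 f = 0 := by
    intro f hf
    have hle : I ≤ RingHom.ker (constantCoeff (R := ℤ) (σ := Fin l)) := by
      rw [hI, Ideal.span_le]
      rintro _ ⟨j, rfl⟩
      simp [RingHom.mem_ker, intForm]
    have := hle hf
    rwa [RingHom.mem_ker, constantCoeff_eq] at this
  have hβ : LTerm σ g ≠ 0 := by
    intro h
    have hmem := lterm_mem_support σ hg0
    rw [h, MvPolynomial.mem_support_iff] at hmem
    exact hmem (hI0 g hgI)
  obtain ⟨kbar, hkbar⟩ : ∃ k, LTerm σ g k ≠ 0 := by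
    by_contra h
    push_neg at h
    exact hβ (Finsupp.ext h)
  have hl : 0 < l := kbar.pos
  set J : Finset (Fin n) := Finset.image t Finset.univ with hJ
  have hJcard : J.card = l := by
    rw [hJ, Finset.card_image_of_injective _ ht.injective, Finset.card_univ, Fintype.card_fin]
  have hJne : J.Nonempty := Finset.card_pos.mp (by rw [hJcard]; exact hl)
  obtain ⟨r, e, ⟨S, T, hS, hT, hSMT, hepos, hchain⟩, hr0, heFv⟩ := heF J hJne (le_of_eq hJcard)
  set Mc := colSub (coefMatrix a) J with hMc
  have hcol : ∀ j : Fin J.card, ∃ jj : Fin l, ∀ k, Mc k j = a (t jj) k := by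
    intro j
    have hmem : ((J.orderIsoOfFin rfl j : Fin n)) ∈ J := (J.orderIsoOfFin rfl j).2
    obtain ⟨jj, -, hjj⟩ := Finset.mem_image.mp hmem
    refine ⟨jj, fun k => ?_⟩
    have h2 : (J.orderEmbOfFin rfl) j = t jj := by
      rw [← Finset.coe_orderIsoOfFin_apply, ← hjj]
    simp [hMc, colSub, coefMatrix, h2]
  have hcol' : ∀ jj : Fin l, ∃ j : Fin J.card, ∀ k, Mc k j = a (t jj) k := by
    intro jj
    have hmem : t jj ∈ J := Finset.mem_image_of_mem _ (Finset.mem_univ jj)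
    obtain ⟨j, hj⟩ := (J.orderIsoOfFin rfl).surjective ⟨t jj, hmem⟩
    refine ⟨j, fun k => ?_⟩
    have h2 : (J.orderEmbOfFin rfl) j = t jj := by
      rw [← Finset.coe_orderIsoOfFin_apply, hj]
    simp [hMc, colSub, coefMatrix, h2]
  -- the common kernel over ℚ is trivial
  have hV : ∀ x : Fin l → ℤ, (∀ j : Fin J.card, ∑ k, x k * Mc k j = 0) → x = 0 := by
    intro x hx
    set V := ⋂ j, hypSet ℚ (fun k => (a (t j) k : ℚ)) 0 with hVdef
    have h0V : (0 : Fin l → ℚ) ∈ V := by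
      refine Set.mem_iInter.mpr fun j => ?_
      simp [hypSet]
    have hVne : V ≠ ∅ := fun h => by rw [h] at h0V; exact h0V
    have hfr : Module.finrank ℚ (affineSpan ℚ V).direction = 0 := by
      rw [adim, if_neg hVne] at hdim
      have : ((Module.finrank ℚ (affineSpan ℚ V).direction : ℤ)) = 0 := by omega
      exact_mod_cast this
    have hdir : (affineSpan ℚ V).direction = ⊥ := Submodule.finrank_eq_zero.mp hfr
    have hxV : (fun k => (x k : ℚ)) ∈ V := by
      refine Set.mem_iInter.mpr fun j => ?_
      obtain ⟨j', hj'⟩ := hcol' j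
      have hz : ∑ k, x k * a (t j) k = 0 := by
        rw [← hx j']
        exact Finset.sum_congr rfl fun k _ => by rw [hj' k]
      show ∑ k, (a (t j) k : ℚ) * (x k : ℚ) = 0
      have : ((∑ k, x k * a (t j) k : ℤ) : ℚ) = 0 := by rw [hz]; norm_num
      rw [← this]
      push_cast
      exact Finset.sum_congr rfl fun k _ => mul_comm _ _
    have hxdir : (fun k => (x k : ℚ)) -ᵥ (0 : Fin l → ℚ) ∈ (affineSpan ℚ V).direction :=
      AffineSubspace.vsub_mem_direction (subset_affineSpan ℚ V hxV) (subset_affineSpan ℚ V h0V)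
    rw [hdir, Submodule.mem_bot] at hxdir
    funext k
    have := congrFun hxdir k
    simp only [vsub_eq_sub, Pi.sub_apply, Pi.zero_apply, sub_zero] at this
    exact_mod_cast this
  -- the rank is full
  have hrl : l ≤ r := by
    by_contra hlt
    push_neg at hlt
    set i0 : Fin l := ⟨l - 1, Nat.sub_lt hl one_pos⟩ with hi0
    have hrowD : ∀ j, (S * Mc * T) i0 j = 0 := by
      intro j
      rw [hSMT]
      rw [if_neg]
      rintro ⟨-, h2⟩
      simp only [hi0] at h2
      omega
    have hD : S * Mc * T = S * (Mc * T) := by rw [Matrix.mul_assoc]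
    have hSMc : ∀ j, (S * Mc) i0 j = 0 := by
      have h1 : S * Mc = (S * Mc * T) * T⁻¹ := (Matrix.mul_nonsing_inv_cancel_right _ _ hT).symm
      intro j
      rw [h1, Matrix.mul_apply]
      exact Finset.sum_eq_zero fun j' _ => by rw [hrowD j', zero_mul]
    have hxz : (fun k => S i0 k) = 0 := by
      refine hV _ fun j => ?_
      have := hSMc j
      rwa [Matrix.mul_apply] at this
    have hdet : S.det = 0 := Matrix.det_eq_zero_of_row_eq_zero i0 fun j => congrFun hxz j
    rw [hdet] at hS
    exact (by simp : ¬ IsUnit (0 : ℤ)) hS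
  by_cases hpe : (p : ℤ) ∣ eF J
  · have hJmem : J ∈ (Finset.univ : Finset (Finset (Fin n))).filter
        (fun J => 1 ≤ J.card ∧ J.card ≤ l) := by
      rw [Finset.mem_filter]
      exact ⟨Finset.mem_univ _, by rw [hJcard]; omega, le_of_eq hJcard⟩
    rw [hρ]
    exact hpe.trans (Finset.dvd_lcm hJmem)
  · exfalso
    have hpℤ : Prime ((p : ℤ)) := Nat.prime_iff_prime_int.mp hp
    have hchain' : ∀ m1 m2, m1 ≤ m2 → m2 < r → e m1 ∣ e m2 := by
      intro m1 m2 h12 h2r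
      obtain ⟨k, rfl⟩ := Nat.exists_eq_add_of_le h12
      clear h12
      induction k with
      | zero => exact dvd_refl _
      | succ k ih =>
        have : m1 + (k + 1) = (m1 + k) + 1 := by omega
        rw [this] at h2r ⊢
        exact (ih (by omega)).trans (hchain _ h2r)
    have hpei : ∀ i : Fin l, ¬ (p : ℤ) ∣ e (i : ℕ) := by
      intro i hdvd
      refine hpe ?_
      rw [heFv]
      exact hdvd.trans (hchain' (i : ℕ) (r - 1) (by omega) (by omega))
    set m : ℤ := ∏ i : Fin l, e (i : ℕ) with hm
    have hpm : ¬ (p : ℤ) ∣ m := by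
      intro h
      obtain ⟨i, -, hi⟩ := hpℤ.exists_mem_finset_dvd h
      exact hpei i hi
    have hmxk : ∀ k0 : Fin l, (C m * X k0 : MvPolynomial (Fin l) ℤ) ∈ I := by
      intro k0
      set v : Fin J.card → ℤ := fun j =>
        if hj : (j : ℕ) < l then
          (∏ i ∈ Finset.univ.erase (⟨(j : ℕ), hj⟩ : Fin l), e (i : ℕ)) * S ⟨(j : ℕ), hj⟩ k0
        else 0 with hv
      set z : Fin l → ℤ := fun k => if k = k0 then m else 0 with hz
      have hDv : ∀ i : Fin l,
          (∑ j, (S * Mc * T) i j * v j) = m * S i k0 := by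
        intro i
        have hiJ : (i : ℕ) < J.card := by rw [hJcard]; exact i.isLt
        rw [Finset.sum_eq_single (⟨(i : ℕ), hiJ⟩ : Fin J.card)]
        · have h1 : (S * Mc * T) i ⟨(i : ℕ), hiJ⟩ = e (i : ℕ) := by
            rw [hSMT, if_pos]
            exact ⟨rfl, lt_of_lt_of_le i.isLt hrl⟩
          have h2 : v ⟨(i : ℕ), hiJ⟩
              = (∏ i' ∈ Finset.univ.erase i, e ((i' : Fin l) : ℕ)) * S i k0 := by
            rw [hv]
            exact dif_pos i.isLt
          rw [h1, h2, ← mul_assoc, hm,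
            Finset.mul_prod_erase Finset.univ (fun i' : Fin l => e ((i' : Fin l) : ℕ))
              (Finset.mem_univ i)]
        · intro b _ hb
          rw [hSMT, if_neg, zero_mul]
          rintro ⟨h1, -⟩
          exact hb (Fin.ext h1.symm)
        · intro h
          exact absurd (Finset.mem_univ _) h
      have hSz : ∀ i, (∑ k, S i k * z k) = m * S i k0 := by
        intro i
        rw [Finset.sum_eq_single k0]
        · simp [hz, mul_comm]
        · intro b _ hb
          simp [hz, hb]
        · intro h
          exact absurd (Finset.mem_univ _) h
      have hMcTv : Mc.mulVec (T.mulVec v) = z := by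
        have hMT : Mc * T = S⁻¹ * (S * Mc * T) := by
          rw [Matrix.mul_assoc S Mc T, Matrix.nonsing_inv_mul_cancel_left _ _ hS]
        have hDv' : (S * Mc * T).mulVec v = S.mulVec z := by
          funext i
          simp only [Matrix.mulVec, dotProduct]
          rw [hDv i, hSz i]
        rw [Matrix.mulVec_mulVec, hMT, ← Matrix.mulVec_mulVec, hDv',
          Matrix.mulVec_mulVec, Matrix.nonsing_inv_mul _ hS, Matrix.one_mulVec]
      choose jjf hjjf using hcol
      set u := T.mulVec v with hu
      have hsum : (∑ j : Fin J.card, C (u j) * intForm (a (t (jjf j)))) = C m * X k0 := by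
        have e1 : ∀ j : Fin J.card, C (u j) * intForm (a (t (jjf j)))
            = ∑ k, C (Mc k j * u j) * X k := by
          intro j
          rw [intForm, Finset.mul_sum]
          refine Finset.sum_congr rfl fun k _ => ?_
          rw [← hjjf j k, ← mul_assoc, ← C_mul, mul_comm (u j) (Mc k j)]
        calc (∑ j : Fin J.card, C (u j) * intForm (a (t (jjf j))))
            = ∑ j : Fin J.card, ∑ k, C (Mc k j * u j) * X k :=
              Finset.sum_congr rfl fun j _ => e1 j
          _ = ∑ k, ∑ j : Fin J.card, C (Mc k j * u j) * X k := Finset.sum_comm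
          _ = ∑ k, C (z k) * X k := by
              refine Finset.sum_congr rfl fun k _ => ?_
              have hzk : z k = ∑ j, Mc k j * u j := by
                rw [← hMcTv]
                rfl
              rw [hzk, map_sum, Finset.sum_mul]
          _ = C m * X k0 := by
              rw [Finset.sum_eq_single k0]
              · simp [hz]
              · intro b _ hb
                simp [hz, hb]
              · intro h
                exact absurd (Finset.mem_univ _) h
      rw [← hsum]
      exact Ideal.sum_mem _ fun j _ =>
        Ideal.mul_mem_left _ _ (Ideal.subset_span ⟨jjf j, rfl⟩)
    have hmon : ∀ β : Fin l →₀ ℕ, β ≠ 0 → (monomial β m : MvPolynomial (Fin l) ℤ) ∈ I := by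
      intro β hb
      obtain ⟨k0, hk0⟩ : ∃ k0, β k0 ≠ 0 := by
        by_contra h
        push_neg at h
        exact hb (Finsupp.ext h)
      have hle : Finsupp.single k0 1 ≤ β := by
        rw [Finsupp.single_le_iff]
        omega
      have hXm : (C m * X k0 : MvPolynomial (Fin l) ℤ) = monomial (Finsupp.single k0 1) m := by
        rw [show (X k0 : MvPolynomial (Fin l) ℤ) = monomial (Finsupp.single k0 1) 1 from rfl,
          C_mul_monomial, mul_one]
      have heq : (monomial (β - Finsupp.single k0 1) 1 : MvPolynomial (Fin l) ℤ) *
          (C m * X k0) = monomial β m := by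
        rw [hXm, monomial_mul, one_mul, tsub_add_cancel_of_le hle]
      rw [← heq]
      exact Ideal.mul_mem_left _ _ (hmxk k0)
    set dgcd : ℤ := (Int.gcd m (LCoef σ g) : ℤ) with hdgcd
    have hdm : dgcd ∣ m := Int.gcd_dvd_left _ _
    have hdg : dgcd ∣ LCoef σ g := Int.gcd_dvd_right _ _
    have hpd : ¬ (p : ℤ) ∣ dgcd := fun h => hpm (h.trans hdm)
    have hd0 : dgcd ≠ 0 := by
      intro h
      rw [hdgcd] at h
      have h2 : Int.gcd m (LCoef σ g) = 0 := by exact_mod_cast h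
      have h3 := (Int.gcd_eq_zero_iff.mp h2).1
      exact hpm (h3 ▸ dvd_zero _)
    have hbez : dgcd = m * Int.gcdA m (LCoef σ g) + LCoef σ g * Int.gcdB m (LCoef σ g) :=
      Int.gcd_eq_gcd_ab m (LCoef σ g)
    set f : MvPolynomial (Fin l) ℤ :=
      C (Int.gcdA m (LCoef σ g)) * monomial (LTerm σ g) m
        + C (Int.gcdB m (LCoef σ g)) * g with hfdef
    have hfI : f ∈ I :=
      Ideal.add_mem _ (Ideal.mul_mem_left _ _ (hmon _ hβ)) (Ideal.mul_mem_left _ _ hgI)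
    have hLC : LCoef σ g = MvPolynomial.coeff (LTerm σ g) g := rfl
    have hcf : MvPolynomial.coeff (LTerm σ g) f = dgcd := by
      rw [hfdef, MvPolynomial.coeff_add, MvPolynomial.coeff_C_mul, MvPolynomial.coeff_C_mul,
        MvPolynomial.coeff_monomial, if_pos rfl, ← hLC, hbez]
      ring
    have hfsupp : ∀ dd ∈ f.support, σ.toSyn dd ≤ σ.toSyn (LTerm σ g) := by
      intro dd hdd
      rw [hfdef] at hdd
      rcases Finset.mem_union.mp (MvPolynomial.support_add hdd) with h1 | h2
      · rw [C_mul_monomial] at h1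
        have h3 := MvPolynomial.support_monomial_subset h1
        rw [Finset.mem_singleton] at h3
        rw [h3]
      · rw [← smul_eq_C_mul] at h2
        exact toSyn_le_lterm σ (MvPolynomial.support_smul h2)
    have hfβ : LTerm σ f = LTerm σ g := lterm_eq σ (by rw [hcf]; exact hd0) hfsupp
    have hfc : LCoef σ f = dgcd := by rw [LCoef, hfβ, hcf]
    have hf0 : f ≠ 0 := fun h => hd0 (by rw [← hcf, h, MvPolynomial.coeff_zero])
    obtain ⟨g', hg'G, hdvd⟩ := hGstrong f hfI hf0
    have hLMf : LMon σ f = monomial (LTerm σ g) dgcd := by rw [LMon, hfβ, hfc]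
    rw [hLMf] at hdvd
    have hmono : (monomial (LTerm σ g') (LCoef σ g') : MvPolynomial (Fin l) ℤ)
        ∣ monomial (LTerm σ g) dgcd := hdvd
    have hLCg' : LCoef σ g' ∣ dgcd := (MvPolynomial.monomial_dvd_monomial.mp hmono).2
    have hg'g : g' ≠ g := by
      rintro rfl
      exact hpm ((hpg.trans hLCg').trans hdm)
    have hdvd2 : LMon σ g' ∣ LMon σ g := by
      refine hdvd.trans ?_
      rw [LMon]
      exact MvPolynomial.monomial_dvd_monomial.mpr ⟨Or.inr le_rfl, hdg⟩
    exact hGmin g' hg'G g hgG hg'g hdvd2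
end

section
/- Let A = {H_1,...,H_n} be a central arrangement in Q^l with defining forms in Z[x_1,...,x_l], and let J = {i_1,...,i_l} be such that H_{i_1} ∩ ... ∩ H_{i_l} = {0}. If a prime p divides a leading coefficient of some element of a minimal strong σ-Gröbner basis of ⟨α_{i_1},...,α_{i_l}⟩_Z, then p divides the determinant (up to sign) of the l×l coefficient matrix C_J, equivalently p divides the product of the elementary divisors of C_J. -/
open MvPolynomial
open scoped Classical

/-- The leading term of a nonzero polynomial lies in its support. -/
lemma LTerm_mem_support {l : ℕ} (σ : MonomialOrder (Fin l)) {f : MvPolynomial (Fin l) ℤ}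
    (hf : f ≠ 0) : LTerm σ f ∈ f.support := by
  obtain ⟨b, hb, he⟩ :=
    Finset.exists_mem_eq_sup f.support (MvPolynomial.support_nonempty.mpr hf)
      (fun d => σ.toSyn d)
  rw [LTerm, he, σ.toSyn.symm_apply_apply]
  exact hb

lemma le_LTerm {l : ℕ} (σ : MonomialOrder (Fin l)) {f : MvPolynomial (Fin l) ℤ}
    {d : Fin l →₀ ℕ} (hd : d ∈ f.support) : σ.toSyn d ≤ σ.toSyn (LTerm σ f) := by
  rw [LTerm, σ.toSyn.apply_symm_apply]
  exact Finset.le_sup hd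

/-- Characterization of the leading term. -/
lemma LTerm_eq_of {l : ℕ} (σ : MonomialOrder (Fin l)) {f : MvPolynomial (Fin l) ℤ}
    {e : Fin l →₀ ℕ} (hc : f.coeff e ≠ 0)
    (hub : ∀ d ∈ f.support, σ.toSyn d ≤ σ.toSyn e) : LTerm σ f = e := by
  have he : e ∈ f.support := MvPolynomial.mem_support_iff.mpr hc
  have : f.support.sup (fun d => σ.toSyn d) = σ.toSyn e :=
    le_antisymm (Finset.sup_le hub) (Finset.le_sup he)
  rw [LTerm, this, σ.toSyn.symm_apply_apply]

/-- key step of Proposition 7.5: if the hyperplanes `H_{i₁},…,H_{i_l}` of a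
central arrangement over `ℚ` meet only at the origin and a prime `p` divides the leading
coefficient of some element of a minimal strong `σ`-Gröbner basis of `⟨α_{i₁},…,α_{i_l}⟩_ℤ`,
then `p` divides the determinant of the `l × l` coefficient matrix `C_J` (equivalently, the
product of its elementary divisors). -/
theorem stmt19 {l n : ℕ} (a : Fin n → Fin l → ℤ) (t : Fin l → Fin n) (ht : StrictMono t)
    (h0 : (⋂ j, hypSet ℚ (fun k => (a (t j) k : ℚ)) 0) = {0})
    (σ : MonomialOrder (Fin l)) (p : ℕ) (hp : p.Prime)
    (G : Finset (MvPolynomial (Fin l) ℤ))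
    (hG : MinStrongGB σ G (Ideal.span (Set.range fun j => intForm (a (t j)))))
    (g : MvPolynomial (Fin l) ℤ) (hg : g ∈ G) (hdvd : (p : ℤ) ∣ LCoef σ g) :
    (p : ℤ) ∣ (Matrix.of fun k j => a (t j) k : Matrix (Fin l) (Fin l) ℤ).det := by
  set M : Matrix (Fin l) (Fin l) ℤ := Matrix.of fun k j => a (t j) k with hMdef
  set I : Ideal (MvPolynomial (Fin l) ℤ) :=
    Ideal.span (Set.range fun j => intForm (a (t j))) with hIdef
  set d : ℤ := M.det with hd
  obtain ⟨hGne, hGspan, hGstrong, hGmin⟩ := hG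
  have hgne : g ≠ 0 := hGne g hg
  have hgI : g ∈ I := by
    rw [← hGspan]; exact Ideal.subset_span hg
  -- the leading coefficient of g is nonzero
  have hLCg : LCoef σ g ≠ 0 :=
    MvPolynomial.mem_support_iff.mp (LTerm_mem_support σ hgne)
  -- every element of I has zero constant coefficient
  have hcc : ∀ f ∈ I, constantCoeff f = 0 := by
    intro f hf
    have hle : I ≤ RingHom.ker (constantCoeff (R := ℤ) (σ := Fin l)) := by
      rw [hIdef, Ideal.span_le]
      rintro _ ⟨j, rfl⟩
      simp [RingHom.mem_ker, intForm]
    exact hle hf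
  -- d • X_k ∈ I for every k, by Cramer's rule
  have hkey : ∀ k : Fin l, (C d * X k : MvPolynomial (Fin l) ℤ) ∈ I := by
    intro k
    have hrepr : (C d * X k : MvPolynomial (Fin l) ℤ) =
        ∑ j, C (M.adjugate j k) * intForm (a (t j)) := by
      have step : ∀ j, C (M.adjugate j k) * intForm (a (t j)) =
          ∑ k', C (M k' j * M.adjugate j k) * X k' := by
        intro j
        rw [intForm, Finset.mul_sum]
        refine Finset.sum_congr rfl fun k' _ => ?_
        have : M k' j = a (t j) k' := rfl
        rw [this, map_mul]; ring
      rw [Finset.sum_congr rfl fun j _ => step j, Finset.sum_comm]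
      have step2 : ∀ k', (∑ j, C (M k' j * M.adjugate j k) * X k' :
          MvPolynomial (Fin l) ℤ) = C ((M * M.adjugate) k' k) * X k' := by
        intro k'
        rw [Matrix.mul_apply, map_sum, Finset.sum_mul]
      rw [Finset.sum_congr rfl fun k' _ => step2 k']
      rw [Matrix.mul_adjugate]
      have : ∀ k' : Fin l, (M.det • (1 : Matrix (Fin l) (Fin l) ℤ)) k' k =
          if k' = k then d else 0 := by
        intro k'
        simp [Matrix.smul_apply, Matrix.one_apply, hd]
      rw [Finset.sum_congr rfl fun k' _ => by rw [this k']]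
      simp [apply_ite C]
    rw [hrepr]
    refine Ideal.sum_mem _ fun j _ => Ideal.mul_mem_left _ _ ?_
    exact Ideal.subset_span ⟨j, rfl⟩
  -- the leading term of g is not the constant term
  have hLTne : LTerm σ g ≠ 0 := by
    intro h
    have := LTerm_mem_support σ hgne
    rw [h] at this
    exact MvPolynomial.mem_support_iff.mp this (hcc g hgI)
  obtain ⟨k, hk⟩ : ∃ k, LTerm σ g k ≠ 0 := by
    by_contra h
    push_neg at h
    exact hLTne (Finsupp.ext h)
  -- hence d · x^{LT g} ∈ I
  have hmonI : (monomial (LTerm σ g) d : MvPolynomial (Fin l) ℤ) ∈ I := by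
    have h1 : (monomial (LTerm σ g - Finsupp.single k 1) 1 : MvPolynomial (Fin l) ℤ) *
        (C d * X k) = monomial (LTerm σ g) d := by
      rw [X, mul_left_comm, monomial_mul, one_mul, C_mul_monomial, mul_one,
        tsub_add_cancel_of_le (Finsupp.single_le_iff.mpr (Nat.one_le_iff_ne_zero.mpr hk))]
    rw [← h1]
    exact Ideal.mul_mem_left _ _ (hkey k)
  -- Bezout combination with leading coefficient c = gcd(d, LC g)
  set u : ℤ := Int.gcdA d (LCoef σ g) with hu
  set v : ℤ := Int.gcdB d (LCoef σ g) with hv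
  set c : ℤ := (Int.gcd d (LCoef σ g) : ℤ) with hc
  have hbezout : c = d * u + LCoef σ g * v := Int.gcd_eq_gcd_ab d (LCoef σ g)
  have hcne : c ≠ 0 := by
    simp only [hc, ne_eq, Int.natCast_eq_zero, Int.gcd_eq_zero_iff, not_and]
    intro _; exact hLCg
  set f : MvPolynomial (Fin l) ℤ :=
    C u * monomial (LTerm σ g) d + C v * g with hf
  have hfI : f ∈ I := Ideal.add_mem _ (Ideal.mul_mem_left _ _ hmonI)
    (Ideal.mul_mem_left _ _ hgI)
  have hfc : f.coeff (LTerm σ g) = c := by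
    rw [hf, MvPolynomial.coeff_add, MvPolynomial.coeff_C_mul, MvPolynomial.coeff_C_mul,
      MvPolynomial.coeff_monomial, if_pos rfl, ← LCoef, hbezout]
    ring
  have hfne : f ≠ 0 := fun h => hcne (by rw [← hfc, h, MvPolynomial.coeff_zero])
  have hfub : ∀ e ∈ f.support, σ.toSyn e ≤ σ.toSyn (LTerm σ g) := by
    intro e he
    rw [MvPolynomial.mem_support_iff, hf, MvPolynomial.coeff_add,
      MvPolynomial.coeff_C_mul, MvPolynomial.coeff_C_mul, MvPolynomial.coeff_monomial] at he
    by_cases h1 : e = LTerm σ g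
    · rw [h1]
    · rw [if_neg (fun h => h1 h.symm), mul_zero, zero_add] at he
      have : e ∈ g.support := by
        rw [MvPolynomial.mem_support_iff]
        intro h2; rw [h2, mul_zero] at he; exact he rfl
      exact le_LTerm σ this
  have hfLT : LTerm σ f = LTerm σ g :=
    LTerm_eq_of σ (by rw [hfc]; exact hcne) hfub
  have hfLC : LCoef σ f = c := by rw [LCoef, hfLT, hfc]
  -- apply the strong Gröbner basis property to f
  obtain ⟨g', hg', hdvd'⟩ := hGstrong f hfI hfne
  rw [LMon, LMon, hfLT, hfLC, monomial_dvd_monomial] at hdvd'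
  obtain ⟨h1, h2⟩ := hdvd'
  have hle : LTerm σ g' ≤ LTerm σ g := h1.resolve_left hcne
  -- g' = g by minimality
  have hgg : g' = g := by
    by_contra hne
    refine hGmin g' hg' g hg hne ?_
    rw [LMon, LMon, monomial_dvd_monomial]
    exact ⟨Or.inr hle, h2.trans (Int.gcd_dvd_right d (LCoef σ g))⟩
  -- conclude
  rw [hgg] at h2
  have : LCoef σ g ∣ d := h2.trans (Int.gcd_dvd_left d (LCoef σ g))
  exact hdvd.trans this
end
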